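/- For every choice of positive integers k, κ, m, r with κ ≤ m there exist integers n₀ and q₀ < q₁ < ... < q_m with q₀ = 0 and q_m = n₀ such that: for every integer N ≥ n₀, every finite alphabet Λ with exactly k elements, every two-element subset L of Λ, and every r-coloring c of Λ^N × [{0,...,N-1}]^κ, there exists an m-dimensional variable word w(v₀,...,v_{m-1}) of length N over Λ, with the wildcard set of vᵢ contained in [qᵢ, q_{i+1}) for each i, such that c is L*-insensitive in the κ*-combinatorial subspace generated by w. -/

import Mathlib

namespace DR

/-- Substitution of letters into an `m`-dimensional variable word. -/
def subst {N m : ℕ} {Λ : Type} (w : Fin N → Λ ⊕ Fin m) (a : Fin m → Λ) : Fin N → Λ :=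
  fun j => Sum.elim id a (w j)

/-- `w` is an `m`-dimensional variable word of length `N` over `Λ`: every variable occurs
and the wildcard sets are in block position. -/
def IsVarWordM {N m : ℕ} {Λ : Type} (w : Fin N → Λ ⊕ Fin m) : Prop :=
  (∀ i : Fin m, ∃ j, w j = Sum.inr i) ∧
  (∀ (j j' : Fin N) (i i' : Fin m),
    w j = Sum.inr i → w j' = Sum.inr i' → i < i' → j < j')

/-- `j` is the first occurrence `ℓ^w_i` of the variable `v_i` in `w`. -/
def IsFirstOcc {N m : ℕ} {Λ : Type} (w : Fin N → Λ ⊕ Fin m) (i : Fin m) (j : Fin N) : Prop :=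
  w j = Sum.inr i ∧ ∀ j' : Fin N, w j' = Sum.inr i → j ≤ j'

/-- `c` is `L*`-insensitive in the `κ*`-combinatorial subspace generated by `w`. -/
def LStarIns (κ : ℕ) {N m r : ℕ} {Λ : Type}
    (c : (Fin N → Λ) → Finset (Fin N) → Fin r) (L : Set Λ)
    (w : Fin N → Λ ⊕ Fin m) : Prop :=
  ∀ lf : Fin m → Fin N, (∀ i, IsFirstOcc w i (lf i)) →
  ∀ F : Finset (Fin m), F.card = κ →
  ∀ a a' : Fin m → Λ, (∀ i ∈ F, a i = a' i) →
    (∀ j : Fin m, a j ∉ L → a j = a' j) → (∀ j : Fin m, a' j ∉ L → a j = a' j) →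
    c (subst w a) (F.image lf) = c (subst w a') (F.image lf)

/-- `c` is strongly `*`-insensitive in the `κ*`-combinatorial subspace generated by `w`. -/
def StrongStarIns (κ : ℕ) {N m r : ℕ} {Λ : Type}
    (c : (Fin N → Λ) → Finset (Fin N) → Fin r)
    (w : Fin N → Λ ⊕ Fin m) : Prop :=
  ∀ lf : Fin m → Fin N, (∀ i, IsFirstOcc w i (lf i)) →
  ∀ F : Finset (Fin m), F.card = κ →
  ∀ a a' : Fin m → Λ, (∀ i ∈ F, a i = a' i) →
    c (subst w a) (F.image lf) = c (subst w a') (F.image lf)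

/-- The wildcard set of `v_i` in `w` is contained in `[q i, q (i+1))` for each `i`. -/
def Compatible {N m : ℕ} {Λ : Type} (w : Fin N → Λ ⊕ Fin m) (q : Fin (m + 1) → ℕ) : Prop :=
  ∀ (j : Fin N) (i : Fin m), w j = Sum.inr i →
    q i.castSucc ≤ (j : ℕ) ∧ (j : ℕ) < q i.succ

/-- The `κ*`-combinatorial subspace generated by `w`, as a subset of
`Λ^N × [{0,...,N-1}]^κ`. -/
def starSubspace (κ : ℕ) {N m : ℕ} {Λ : Type} (w : Fin N → Λ ⊕ Fin m) :
    Set ((Fin N → Λ) × Finset (Fin N)) :=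
  {p | (∃ a : Fin m → Λ, p.1 = subst w a) ∧
    ∃ F : Finset (Fin m), F.card = κ ∧
      ∃ lf : Fin m → Fin N, (∀ i, IsFirstOcc w i (lf i)) ∧ p.2 = F.image lf}

/-- overwrite positions `< q0` by `u`. -/
def combine {N : ℕ} {Λ : Type} (q0 : ℕ) (u v : Fin N → Λ) : Fin N → Λ :=
  fun p => if (p : ℕ) < q0 then u p else v p

lemma isFirstOcc_unique {N m : ℕ} {Λ : Type} {w : Fin N → Λ ⊕ Fin m} {i : Fin m}
    {j j' : Fin N} (h1 : IsFirstOcc w i j) (h2 : IsFirstOcc w i j') : j = j' :=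
  le_antisymm (h1.2 _ h2.1) (h2.2 _ h1.1)

/-- The downward induction invariant. -/
def Inv (m : ℕ) {N r : ℕ} {Λ : Type} (L : Finset Λ) (x : Λ)
    (c : (Fin N → Λ) → Finset (Fin N) → Fin r) (Q : ℕ → ℕ) (i : ℕ) : Prop :=
  ∃ (w : Fin N → Λ ⊕ Fin m) (ℓ : Fin m → Fin N),
    (∀ p : Fin N, ((p : ℕ) < Q i ∨ Q m ≤ (p : ℕ)) → w p = Sum.inl x) ∧
    (∀ (p : Fin N) (i' : Fin m), w p = Sum.inr i' →
        i ≤ (i' : ℕ) ∧ Q (i' : ℕ) ≤ (p : ℕ) ∧ (p : ℕ) < Q ((i' : ℕ) + 1)) ∧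
    (∀ i' : Fin m, i ≤ (i' : ℕ) → IsFirstOcc w i' (ℓ i')) ∧
    (∀ (u : Fin N → Λ) (a a' : Fin m → Λ) (G : Finset (Fin N)),
        (∀ p ∈ G, (p : ℕ) < Q i ∨ ∃ i' : Fin m, i ≤ (i' : ℕ) ∧ p = ℓ i') →
        (∀ i' : Fin m, i ≤ (i' : ℕ) →
            a i' = a' i' ∨ (a i' ∈ L ∧ a' i' ∈ L ∧ ℓ i' ∉ G)) →
        c (combine (Q i) u (subst w a)) G = c (combine (Q i) u (subst w a')) G)

lemma inv_base {m N r : ℕ} {Λ : Type} (L : Finset Λ) (x : Λ)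
    (c : (Fin N → Λ) → Finset (Fin N) → Fin r) (Q : ℕ → ℕ) (hN : 0 < N) :
    Inv m L x c Q m := by
  refine ⟨fun _ => Sum.inl x, fun _ => ⟨0, hN⟩, fun p _ => rfl, ?_, ?_, ?_⟩
  · intro p i' h; simp at h
  · intro i' hi'; exact absurd hi' (Nat.not_le.mpr i'.2)
  · intro u a a' G _ _; rfl

lemma inv_step {k m N r : ℕ} {Λ : Type} [Fintype Λ] [DecidableEq Λ] (hcard : Fintype.card Λ = k)
    {L : Finset Λ} {x y : Λ} (hxy : x ≠ y) (hL : L = {x, y})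
    (c : (Fin N → Λ) → Finset (Fin N) → Fin r) (hr : 0 < r)
    (Q : ℕ → ℕ) (hQ : ∀ j, Q (j + 1) = Q j + r ^ (k ^ (Q j + m) * 2 ^ (Q j + m)))
    (hQN : Q m ≤ N) (hQmono : Monotone Q)
    (i : ℕ) (him : i < m) (IH : Inv m L x c Q (i + 1)) : Inv m L x c Q i := by
  classical
  obtain ⟨w', ℓ', h1', h2', h3', h4'⟩ := IH
  set E := r ^ (k ^ (Q i + m) * 2 ^ (Q i + m)) with hE
  have hQi1 : Q (i + 1) = Q i + E := hQ i
  have hQi1m : Q (i + 1) ≤ Q m := hQmono him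
  have hQiN : Q i ≤ N := le_trans (le_trans (Nat.le_add_right _ _) hQi1.symm.le)
    (le_trans hQi1m hQN)
  -- the pigeonhole data type
  let emb : Fin (Q i) → Fin N := fun p => ⟨p, lt_of_lt_of_le p.2 hQiN⟩
  let wordOf : ℕ → (Fin (Q i) → Λ) → (Fin m → Λ) → (Fin N → Λ) := fun j u a p =>
    if h : (p : ℕ) < Q i then u ⟨p, h⟩
    else if (p : ℕ) < Q i + j then x
    else if (p : ℕ) < Q (i + 1) then y
    else subst w' a p
  let setOf : Finset (Fin (Q i)) → Finset (Fin m) → Finset (Fin N) :=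
    fun Gl S => Gl.image emb ∪ S.image ℓ'
  let f : Fin (E + 1) →
      ((Fin (Q i) → Λ) × (Fin m → Λ) × Finset (Fin (Q i)) × Finset (Fin m)) → Fin r :=
    fun j d => c (wordOf j d.1 d.2.1) (setOf d.2.2.1 d.2.2.2)
  have cardD : Fintype.card
      ((Fin (Q i) → Λ) × (Fin m → Λ) × Finset (Fin (Q i)) × Finset (Fin m))
      = k ^ (Q i + m) * 2 ^ (Q i + m) := by
    simp [Fintype.card_fun, Fintype.card_finset, hcard]
    rw [pow_add, pow_add]; ring
  have cardlt : Fintype.card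
      (((Fin (Q i) → Λ) × (Fin m → Λ) × Finset (Fin (Q i)) × Finset (Fin m)) → Fin r)
      < Fintype.card (Fin (E + 1)) := by
    rw [Fintype.card_fun, Fintype.card_fin, Fintype.card_fin, cardD, ← hE]
    exact Nat.lt_succ_self E
  obtain ⟨j1, j2, hne, hfeq⟩ := Fintype.exists_ne_map_eq_of_card_lt f cardlt
  obtain ⟨s, t, hst, hf⟩ : ∃ s t : Fin (E + 1), s < t ∧ f s = f t := by
    rcases lt_or_gt_of_ne hne with h | h
    · exact ⟨j1, j2, h, hfeq⟩
    · exact ⟨j2, j1, h, hfeq.symm⟩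
  have hstv : (s : ℕ) < (t : ℕ) := hst
  have htE : (t : ℕ) ≤ E := Nat.lt_succ_iff.mp t.2
  have htQ : Q i + (t : ℕ) ≤ Q (i + 1) := by omega
  have hsN : Q i + (s : ℕ) < N := by
    have : Q i + (s : ℕ) < Q (i + 1) := by omega
    omega
  set iF : Fin m := ⟨i, him⟩ with hiF
  set w : Fin N → Λ ⊕ Fin m := fun p =>
    if (p : ℕ) < Q i + (s : ℕ) then Sum.inl x
    else if (p : ℕ) < Q i + (t : ℕ) then Sum.inr iF
    else if (p : ℕ) < Q (i + 1) then Sum.inl y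
    else w' p with hw
  set ℓi : Fin N := ⟨Q i + (s : ℕ), hsN⟩ with hℓi
  set ℓ : Fin m → Fin N := Function.update ℓ' iF ℓi with hℓ
  -- basic facts about w
  have hwlow : ∀ p : Fin N, (p : ℕ) < Q (i + 1) → w' p = Sum.inl x :=
    fun p hp => h1' p (Or.inl hp)
  have hwhigh : ∀ p : Fin N, Q (i + 1) ≤ (p : ℕ) → w p = w' p := by
    intro p hp; rw [hw]; simp only
    rw [if_neg (by omega), if_neg (by omega), if_neg (by omega)]
  have hwvar : ∀ p : Fin N, (p : ℕ) < Q (i + 1) →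
      (w p = Sum.inl x ∨ w p = Sum.inr iF ∨ w p = Sum.inl y) := by
    intro p hp; rw [hw]; simp only
    by_cases h1 : (p : ℕ) < Q i + (s : ℕ)
    · rw [if_pos h1]; exact Or.inl rfl
    · rw [if_neg h1]
      by_cases h2 : (p : ℕ) < Q i + (t : ℕ)
      · rw [if_pos h2]; exact Or.inr (Or.inl rfl)
      · rw [if_neg h2, if_pos hp]; exact Or.inr (Or.inr rfl)
  have hwinr : ∀ (p : Fin N) (i' : Fin m), w p = Sum.inr i' →
      (i' = iF ∧ Q i + (s : ℕ) ≤ (p : ℕ) ∧ (p : ℕ) < Q i + (t : ℕ)) ∨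
      (Q (i + 1) ≤ (p : ℕ) ∧ w' p = Sum.inr i') := by
    intro p i' hp
    by_cases hc : (p : ℕ) < Q (i + 1)
    · left
      rcases hwvar p hc with h | h | h
      · rw [hp] at h; simp at h
      · rw [hp] at h
        refine ⟨(Sum.inr.injEq .. ▸ h).symm ▸ rfl, ?_, ?_⟩
        · by_contra hlt
          rw [hw] at hp; simp only at hp
          rw [if_pos (by omega)] at hp; simp at hp
        · by_contra hge
          rw [hw] at hp; simp only at hp
          rw [if_neg (by omega), if_neg (by omega), if_pos hc] at hp; simp at hp
      · rw [hp] at h; simp at h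
    · right
      exact ⟨by omega, by rw [← hwhigh p (by omega)]; exact hp⟩
  have hwiF : w ℓi = Sum.inr iF := by
    rw [hw, hℓi]; simp only
    rw [if_neg (show ¬(Q i + (s : ℕ) < Q i + (s : ℕ)) by omega),
      if_pos (show Q i + (s : ℕ) < Q i + (t : ℕ) by omega)]
  have hQiF : (iF : ℕ) = i := rfl
  -- first occurrences
  have hfirst : ∀ i' : Fin m, i ≤ (i' : ℕ) → IsFirstOcc w i' (ℓ i') := by
    intro i' hi'
    by_cases hc : i' = iF
    · subst hc
      rw [hℓ, Function.update_self]
      refine ⟨hwiF, ?_⟩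
      intro p hp
      rcases hwinr p iF hp with ⟨_, hge, _⟩ | ⟨_, hp'⟩
      · exact hge
      · exact absurd (h2' p iF hp').1 (by omega)
    · have hi1 : i + 1 ≤ (i' : ℕ) := by
        rcases Nat.lt_or_ge i (i' : ℕ) with h | h
        · omega
        · exact absurd (Fin.ext (by omega) : i' = iF) hc
      have hfo := h3' i' hi1
      have hge : Q (i + 1) ≤ ((ℓ' i' : ℕ)) :=
        le_trans (hQmono hi1) (h2' (ℓ' i') i' hfo.1).2.1
      rw [hℓ, Function.update_of_ne hc]
      refine ⟨by rw [hwhigh _ hge]; exact hfo.1, ?_⟩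
      intro p hp
      rcases hwinr p i' hp with ⟨he, _, _⟩ | ⟨_, hp'⟩
      · exact absurd he hc
      · exact hfo.2 p hp'
  refine ⟨w, ℓ, ?_, ?_, hfirst, ?_⟩
  · -- low/high constant
    intro p hp
    rcases hp with hp | hp
    · rw [hw]; simp only; rw [if_pos (by omega)]
    · rw [hwhigh p (by omega)]; exact h1' p (Or.inr hp)
  · -- block structure
    intro p i' hp
    rcases hwinr p i' hp with ⟨he, hge, hlt⟩ | ⟨_, hp'⟩
    · subst he
      exact ⟨le_rfl, show Q i ≤ (p : ℕ) ∧ (p : ℕ) < Q (i + 1) by omega⟩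
    · obtain ⟨ha, hb, hc2⟩ := h2' p i' hp'
      exact ⟨by omega, hb, hc2⟩
  · -- insensitivity
    intro u a a' G hG hcond
    set a'' := Function.update a iF (a' iF) with ha''
    -- rewriting combine through to level i+1
    have hcomb : ∀ b : Fin m → Λ, b iF = a'' iF →
        combine (Q i) u (subst w b)
          = combine (Q (i + 1)) (combine (Q i) u (subst w a'')) (subst w' b) := by
      intro b hb
      funext p
      simp only [combine]
      by_cases hc1 : (p : ℕ) < Q (i + 1)
      · rw [if_pos hc1]
        by_cases hc2 : (p : ℕ) < Q i
        · rw [if_pos hc2, if_pos hc2]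
        · rw [if_neg hc2, if_neg hc2]
          rcases hwvar p hc1 with h | h | h <;> simp [subst, h]
          rw [hb]
      · rw [if_neg hc1, if_neg (by omega)]
        simp [subst, hwhigh p (by omega)]
    have key1 : c (combine (Q i) u (subst w a)) G = c (combine (Q i) u (subst w a'')) G := by
      by_cases hai : a iF = a' iF
      · have : a'' = a := by rw [ha'', ← hai, Function.update_eq_self]
        rw [this]
      · obtain ⟨haL, ha'L, hlG⟩ := (hcond iF le_rfl).resolve_left hai
        have hℓiG : ℓi ∉ G := by rw [hℓ] at hlG; rwa [Function.update_self] at hlG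
        -- encode the data
        set ub : Fin (Q i) → Λ := fun p => u (emb p) with hub
        set Gl : Finset (Fin (Q i)) := Finset.univ.filter (fun p => emb p ∈ G) with hGl
        set S : Finset (Fin m) :=
          Finset.univ.filter (fun i' => i + 1 ≤ (i' : ℕ) ∧ ℓ' i' ∈ G) with hS
        have hGrec : setOf Gl S = G := by
          apply Finset.Subset.antisymm
          · intro p hp
            rcases Finset.mem_union.mp hp with hp | hp
            · obtain ⟨q, hq, rfl⟩ := Finset.mem_image.mp hp
              exact (Finset.mem_filter.mp hq).2
            · obtain ⟨i', hi', rfl⟩ := Finset.mem_image.mp hp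
              exact (Finset.mem_filter.mp hi').2.2
          · intro p hp
            rcases hG p hp with h | ⟨i', hi', rfl⟩
            · apply Finset.mem_union_left
              refine Finset.mem_image.mpr ⟨⟨(p : ℕ), h⟩, ?_, ?_⟩
              · refine Finset.mem_filter.mpr ⟨Finset.mem_univ _, ?_⟩
                have he : emb ⟨(p : ℕ), h⟩ = p := Fin.ext rfl
                rw [he]; exact hp
              · exact Fin.ext rfl
            · apply Finset.mem_union_right
              have hne : i' ≠ iF := by
                intro he; subst he
                rw [hℓ, Function.update_self] at hp
                exact hℓiG hp
              have hi1 : i + 1 ≤ (i' : ℕ) := by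
                rcases Nat.lt_or_ge i (i' : ℕ) with h | h
                · omega
                · exact absurd (Fin.ext (by omega) : i' = iF) hne
              rw [hℓ, Function.update_of_ne hne] at hp ⊢
              exact Finset.mem_image.mpr ⟨i',
                Finset.mem_filter.mpr ⟨Finset.mem_univ _, hi1, hp⟩, rfl⟩
        -- word identification
        have hword : ∀ (b : Fin m → Λ) (j : Fin (E + 1)),
            ((b iF = x ∧ (j : ℕ) = (t : ℕ)) ∨ (b iF = y ∧ (j : ℕ) = (s : ℕ))) →
            (∀ i'' : Fin m, i'' ≠ iF → b i'' = a i'') →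
            combine (Q i) u (subst w b) = wordOf (j : ℕ) ub a := by
          intro b j hj hagree
          funext p
          simp only [combine, wordOf]
          by_cases hc1 : (p : ℕ) < Q i
          · rw [if_pos hc1, dif_pos hc1, hub]
          · rw [if_neg hc1, dif_neg hc1]
            have hjt : (j : ℕ) ≤ (t : ℕ) := by rcases hj with ⟨_, h⟩ | ⟨_, h⟩ <;> omega
            have hjs : (s : ℕ) ≤ (j : ℕ) := by rcases hj with ⟨_, h⟩ | ⟨_, h⟩ <;> omega
            by_cases hc2 : (p : ℕ) < Q i + (s : ℕ)
            · have hwp : w p = Sum.inl x := by rw [hw]; simp only; rw [if_pos hc2]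
              rw [if_pos (by omega)]; simp [subst, hwp]
            · by_cases hc3 : (p : ℕ) < Q i + (t : ℕ)
              · have hwp : w p = Sum.inr iF := by
                  rw [hw]; simp only; rw [if_neg hc2, if_pos hc3]
                rcases hj with ⟨hbx, hjv⟩ | ⟨hby, hjv⟩
                · rw [if_pos (by omega)]; simp [subst, hwp, hbx]
                · rw [if_neg (by omega), if_pos (by omega)]; simp [subst, hwp, hby]
              · by_cases hc4 : (p : ℕ) < Q (i + 1)
                · have hwp : w p = Sum.inl y := by
                    rw [hw]; simp only; rw [if_neg hc2, if_neg hc3, if_pos hc4]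
                  rw [if_neg (by omega), if_pos hc4]; simp [subst, hwp]
                · rw [if_neg (by omega), if_neg hc4]
                  have hwp : w p = w' p := hwhigh p (by omega)
                  simp only [subst, hwp]
                  rcases hq : w' p with lam | i''
                  · rfl
                  · have : i'' ≠ iF := by
                      intro he; subst he
                      exact absurd (h2' p iF hq).1 (by omega)
                    simp [hagree i'' this]
        -- now use f s = f t
        have hfa := congrFun hf (ub, a, Gl, S)
        rcases Finset.mem_insert.mp (hL ▸ haL) with hax | hax
        · -- a iF = x, so a' iF = y
          have hay : a' iF = y := by
            rcases Finset.mem_insert.mp (hL ▸ ha'L) with h | h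
            · exact absurd (hax.trans h.symm) hai
            · exact Finset.mem_singleton.mp h
          have e1 : combine (Q i) u (subst w a) = wordOf (t : ℕ) ub a :=
            hword a t (Or.inl ⟨hax, rfl⟩) (fun _ _ => rfl)
          have e2 : combine (Q i) u (subst w a'') = wordOf (s : ℕ) ub a :=
            hword a'' s (Or.inr ⟨by rw [ha'', Function.update_self, hay], rfl⟩)
              (fun i'' h => by rw [ha'', Function.update_of_ne h])
          rw [e1, e2, ← hGrec]
          exact hfa.symm
        · -- a iF = y, so a' iF = x
          have hay : a iF = y := Finset.mem_singleton.mp hax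
          have hax' : a' iF = x := by
            rcases Finset.mem_insert.mp (hL ▸ ha'L) with h | h
            · exact h
            · exact absurd (hay.trans (Finset.mem_singleton.mp h).symm) hai
          have e1 : combine (Q i) u (subst w a) = wordOf (s : ℕ) ub a :=
            hword a s (Or.inr ⟨hay, rfl⟩) (fun _ _ => rfl)
          have e2 : combine (Q i) u (subst w a'') = wordOf (t : ℕ) ub a :=
            hword a'' t (Or.inl ⟨by rw [ha'', Function.update_self, hax'], rfl⟩)
              (fun i'' h => by rw [ha'', Function.update_of_ne h])
          rw [e1, e2, ← hGrec]
          exact hfa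
    have key2 : c (combine (Q i) u (subst w a'')) G = c (combine (Q i) u (subst w a')) G := by
      rw [hcomb a'' rfl, hcomb a' (by rw [ha'', Function.update_self])]
      apply h4'
      · intro p hp
        rcases hG p hp with h | ⟨i', hi', rfl⟩
        · left; omega
        · by_cases hc : i' = iF
          · subst hc; left
            rw [hℓ, Function.update_self, hℓi]
            show Q i + (s : ℕ) < Q (i + 1)
            omega
          · right
            have hi1 : i + 1 ≤ (i' : ℕ) := by
              rcases Nat.lt_or_ge i (i' : ℕ) with h | h
              · omega
              · exact absurd (Fin.ext (by omega) : i' = iF) hc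
            exact ⟨i', hi1, by rw [hℓ, Function.update_of_ne hc]⟩
      · intro i' hi1
        have hne : i' ≠ iF := by
          intro he; subst he; exact absurd hi1 (by omega)
        have h := hcond i' (by omega)
        rw [ha'', Function.update_of_ne hne]
        rcases h with h | ⟨hL1, hL2, hnG⟩
        · exact Or.inl h
        · rw [hℓ, Function.update_of_ne hne] at hnG
          exact Or.inr ⟨hL1, hL2, hnG⟩
    exact key1.trans key2


/-- **Starred variant of Shelah's insensitivity lemma** (Lemma 7.3 of the paper). -/
theorem shelah_star (k κ m r : ℕ) (hk : 0 < k) (hκ : 0 < κ) (hm : 0 < m) (hr : 0 < r)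
    (hκm : κ ≤ m) :
    ∃ (n₀ : ℕ) (q : Fin (m + 1) → ℕ), 0 < n₀ ∧ StrictMono q ∧
      q 0 = 0 ∧ q (Fin.last m) = n₀ ∧
      ∀ N : ℕ, n₀ ≤ N → ∀ (Λ : Type) [Fintype Λ], Fintype.card Λ = k →
        ∀ L : Finset Λ, L.card = 2 →
        ∀ c : (Fin N → Λ) → Finset (Fin N) → Fin r,
        ∃ w : Fin N → Λ ⊕ Fin m, IsVarWordM w ∧ Compatible w q ∧
          LStarIns κ c (↑L : Set Λ) w := by
  classical
  set Q : ℕ → ℕ :=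
    fun n => Nat.rec 0 (fun _ acc => acc + r ^ (k ^ (acc + m) * 2 ^ (acc + m))) n with hQdef
  have hQ0 : Q 0 = 0 := rfl
  have hQs : ∀ j, Q (j + 1) = Q j + r ^ (k ^ (Q j + m) * 2 ^ (Q j + m)) := fun j => rfl
  have hstrict : StrictMono Q := by
    apply strictMono_nat_of_lt_succ
    intro n
    rw [hQs]
    have := pow_pos hr (k ^ (Q n + m) * 2 ^ (Q n + m))
    omega
  have hmono : Monotone Q := hstrict.monotone
  have hn0 : 0 < Q m := by
    have := hstrict hm
    rw [hQ0] at this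
    omega
  refine ⟨Q m, fun i : Fin (m + 1) => Q i, hn0, ?_, ?_, ?_, ?_⟩
  · intro i j hij
    exact hstrict (show (i : ℕ) < (j : ℕ) from hij)
  · simpa using hQ0
  · simp
  · intro N hN Λ _ hcard L hL c
    obtain ⟨x, y, hxy, hLxy⟩ := Finset.card_eq_two.mp hL
    have hN0 : 0 < N := lt_of_lt_of_le hn0 hN
    have hQN : Q m ≤ N := hN
    have hall : ∀ d, d ≤ m → Inv m L x c Q (m - d) := by
      intro d
      induction d with
      | zero => intro _; simpa using inv_base L x c Q hN0
      | succ d ih =>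
        intro hd
        have h1 : m - d = (m - (d + 1)) + 1 := by omega
        have hIH := ih (by omega)
        rw [h1] at hIH
        exact inv_step hcard hxy hLxy c hr Q hQs hQN hmono (m - (d + 1)) (by omega) hIH
    have h0 := hall m le_rfl
    rw [Nat.sub_self] at h0
    obtain ⟨w, ℓ, hw1, hw2, hw3, hw4⟩ := h0
    refine ⟨w, ⟨?_, ?_⟩, ?_, ?_⟩
    · intro i
      exact ⟨ℓ i, (hw3 i (Nat.zero_le _)).1⟩
    · intro j j' i i' hj hj' hii
      obtain ⟨_, hb1, hb2⟩ := hw2 j i hj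
      obtain ⟨_, hb1', _⟩ := hw2 j' i' hj'
      have h12 : Q ((i : ℕ) + 1) ≤ Q (i' : ℕ) := hmono (Nat.succ_le_of_lt hii)
      exact show (j : ℕ) < (j' : ℕ) by omega
    · intro j i hji
      obtain ⟨_, hb1, hb2⟩ := hw2 j i hji
      constructor
      · simpa using hb1
      · simpa using hb2
    · intro lf hlf F hF a a' hFa ha2 ha3
      have hlfℓ : ∀ i, lf i = ℓ i :=
        fun i => isFirstOcc_unique (hlf i) (hw3 i (Nat.zero_le _))
      have hcomb : ∀ b : Fin m → Λ,
          combine (Q 0) (subst w a) (subst w b) = subst w b := by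
        intro b; funext p
        simp [combine, hQ0]
      have hG : ∀ p ∈ F.image lf,
          (p : ℕ) < Q 0 ∨ ∃ i' : Fin m, 0 ≤ (i' : ℕ) ∧ p = ℓ i' := by
        intro p hp
        obtain ⟨i', _, rfl⟩ := Finset.mem_image.mp hp
        exact Or.inr ⟨i', Nat.zero_le _, hlfℓ i'⟩
      have hcond : ∀ i' : Fin m, 0 ≤ (i' : ℕ) →
          a i' = a' i' ∨ (a i' ∈ L ∧ a' i' ∈ L ∧ ℓ i' ∉ F.image lf) := by
        intro i' _
        by_cases he : a i' = a' i'
        · exact Or.inl he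
        · refine Or.inr ⟨?_, ?_, ?_⟩
          · by_contra hx
            exact he (ha2 i' (by simpa using hx))
          · by_contra hx
            exact he (ha3 i' (by simpa using hx))
          · intro hmem
            rw [← hlfℓ i'] at hmem
            obtain ⟨i'', hi''F, heq⟩ := Finset.mem_image.mp hmem
            have he2 : i'' = i' := by
              have e1 := (hlf i'').1
              have e2 := (hlf i').1
              rw [heq, e2] at e1
              exact Sum.inr.inj e1.symm
            exact he (hFa i' (he2 ▸ hi''F))
      have := hw4 (subst w a) a a' (F.image lf) hG hcond
      rwa [hcomb a, hcomb a'] at this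

end DR
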